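/- arXiv:2210.00408 — 2 statements merged into one kernel-verified Lean document; each statement's English description precedes it below -/
import Mathlib

section
/- For every natural number n, the number of possible positions of an n-step simple random walk on Z^3 is |P_n^3| = (2n^3 + 6n^2 + 7n + 3)/3. -/
open Finset

def P (d n : ℕ) : Set (Fin d → ℤ) :=
  {x | ∃ f : Fin n → Fin d → ℤ,
    (∀ i, ∃ j : Fin d, f i = Pi.single j 1 ∨ f i = Pi.single j (-1)) ∧
    x = ∑ i, f i}

def Nrm (x : Fin 3 → ℤ) : ℕ := (x 0).natAbs + (x 1).natAbs + (x 2).natAbs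

lemma key (y : Fin 3 → ℤ) (j : Fin 3) (e : ℤ) (he : e = 1 ∨ e = -1) :
    Nrm (y + Pi.single j e) = Nrm y + 1 ∨ Nrm y = Nrm (y + Pi.single j e) + 1 := by
  fin_cases j <;> simp [Nrm, Pi.single_apply] <;> omega

lemma step_mem {n : ℕ} {y : Fin 3 → ℤ} (hy : y ∈ P 3 n) (j : Fin 3) (e : ℤ)
    (he : e = 1 ∨ e = -1) : y + Pi.single j e ∈ P 3 (n + 1) := by
  obtain ⟨f, hf, rfl⟩ := hy
  refine ⟨Fin.snoc f (Pi.single j e), ?_, ?_⟩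
  · intro i
    refine Fin.lastCases ?_ ?_ i
    · exact ⟨j, by rcases he with rfl | rfl <;> simp [Fin.snoc_last]⟩
    · intro i; obtain ⟨j', hj'⟩ := hf i
      exact ⟨j', by simpa [Fin.snoc_castSucc] using hj'⟩
  · rw [Fin.sum_univ_castSucc]; simp [Fin.snoc_castSucc, Fin.snoc_last]

lemma P_sub (n : ℕ) : ∀ x ∈ P 3 n, Nrm x ≤ n ∧ Nrm x % 2 = n % 2 := by
  induction n with
  | zero =>
    rintro x ⟨f, hf, rfl⟩
    simp [Nrm]
  | succ n ih =>
    rintro x ⟨f, hf, rfl⟩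
    have hy : (∑ i : Fin n, f i.castSucc) ∈ P 3 n := ⟨_, fun i => hf _, rfl⟩
    obtain ⟨h1, h2⟩ := ih _ hy
    obtain ⟨j, hj⟩ := hf (Fin.last n)
    rw [Fin.sum_univ_castSucc]
    rcases hj with hj | hj <;> rw [hj]
    · rcases key (∑ i : Fin n, f i.castSucc) j 1 (Or.inl rfl) with h | h <;> omega
    · rcases key (∑ i : Fin n, f i.castSucc) j (-1) (Or.inr rfl) with h | h <;> omega

lemma sub_P (n : ℕ) : ∀ x : Fin 3 → ℤ, Nrm x ≤ n → Nrm x % 2 = n % 2 → x ∈ P 3 n := by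
  induction n with
  | zero =>
    intro x h1 _
    refine ⟨Fin.elim0, fun i => i.elim0, ?_⟩
    have e0 : x 0 = 0 := by simp only [Nrm] at h1; omega
    have e1 : x 1 = 0 := by simp only [Nrm] at h1; omega
    have e2 : x 2 = 0 := by simp only [Nrm] at h1; omega
    funext k; fin_cases k
    · simpa using e0
    · simpa using e1
    · simpa using e2
  | succ n ih =>
    intro x h1 h2
    by_cases h0 : Nrm x = 0
    · have e0 : x 0 = 0 := by simp only [Nrm] at h0; omega
      have e1 : x 1 = 0 := by simp only [Nrm] at h0; omega
      have e2 : x 2 = 0 := by simp only [Nrm] at h0; omega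
      have hx : ∀ k : Fin 3, x k = 0 := by
        intro k; fin_cases k
        · simpa using e0
        · simpa using e1
        · simpa using e2
      have hn : 1 ≤ n ∧ 1 % 2 = n % 2 := by omega
      have hy : (Pi.single (0 : Fin 3) 1 : Fin 3 → ℤ) ∈ P 3 n := by
        apply ih
        · simp only [Nrm, Pi.single_apply]; simp; omega
        · simp only [Nrm, Pi.single_apply]; simp; omega
      have := step_mem hy 0 (-1) (Or.inr rfl)
      have hxe : x = Pi.single (0 : Fin 3) 1 + Pi.single (0 : Fin 3) (-1) := by
        funext k; simp only [Pi.add_apply, Pi.single_apply, hx k]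
        by_cases hk0 : k = 0 <;> simp [hk0]
      rwa [hxe]
    · obtain ⟨k, hk⟩ : ∃ k, x k ≠ 0 := by
        by_contra h; push_neg at h; apply h0; simp [Nrm, h]
      set e : ℤ := if 0 < x k then 1 else -1 with hedef
      have he : e = 1 ∨ e = -1 := by rw [hedef]; split <;> simp
      have hsign : (e = 1 ∧ 0 < x k) ∨ (e = -1 ∧ x k < 0) := by
        rw [hedef]; split
        · left; constructor; rfl; assumption
        · right; constructor; rfl; omega
      have hNy : Nrm (x - Pi.single k e) + 1 = Nrm x := by
        fin_cases k <;>
          simp only [Nrm, Pi.sub_apply, Pi.single_apply] at * <;>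
          simp at * <;> omega
      have hy : (x - Pi.single k e) ∈ P 3 n := ih _ (by omega) (by omega)
      have := step_mem hy k e he
      rwa [sub_add_cancel] at this

noncomputable def E (n : ℕ) : Finset (Fin 3 → ℤ) :=
  (Fintype.piFinset fun _ => Finset.Icc (-(n : ℤ)) n).filter
    fun x => Nrm x ≤ n ∧ Nrm x % 2 = n % 2

lemma mem_E {n : ℕ} {x : Fin 3 → ℤ} : x ∈ E n ↔ Nrm x ≤ n ∧ Nrm x % 2 = n % 2 := by
  simp only [E, Finset.mem_filter, Fintype.mem_piFinset, Finset.mem_Icc]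
  constructor
  · tauto
  · intro h
    refine ⟨fun k => ?_, h⟩
    have h1 := h.1
    simp only [Nrm] at h1
    fin_cases k
    · exact (by omega : -(n:ℤ) ≤ x 0 ∧ x 0 ≤ n)
    · exact (by omega : -(n:ℤ) ≤ x 1 ∧ x 1 ≤ n)
    · exact (by omega : -(n:ℤ) ≤ x 2 ∧ x 2 ≤ n)

noncomputable def D (n : ℕ) : Finset ((_ : ℤ) × ℤ × ℤ) :=
  (Finset.Icc (-(n:ℤ)) n).sigma fun z =>
    Finset.Icc (0:ℤ) ((n:ℤ) - z.natAbs) ×ˢ Finset.Icc (0:ℤ) ((n:ℤ) - z.natAbs)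

lemma mem_D {n : ℕ} {p : (_ : ℤ) × ℤ × ℤ} :
    p ∈ D n ↔ (-(n:ℤ) ≤ p.1 ∧ p.1 ≤ n) ∧ (0 ≤ p.2.1 ∧ p.2.1 ≤ (n:ℤ) - p.1.natAbs)
      ∧ (0 ≤ p.2.2 ∧ p.2.2 ≤ (n:ℤ) - p.1.natAbs) := by
  simp [D, Finset.mem_sigma, Finset.mem_Icc, Finset.mem_product, and_assoc]

lemma card_E (n : ℕ) : (E n).card = (D n).card := by
  apply Finset.card_nbij'
    (i := fun x => ⟨x 2, ((x 0 + x 1 + ((n:ℤ) - (x 2).natAbs)) / 2,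
      (x 0 - x 1 + ((n:ℤ) - (x 2).natAbs)) / 2)⟩)
    (j := fun p => ![p.2.1 + p.2.2 - ((n:ℤ) - p.1.natAbs), p.2.1 - p.2.2, p.1])
  · intro x hx
    rw [Finset.mem_coe, mem_E] at hx
    rw [Finset.mem_coe, mem_D]
    simp only [Nrm] at hx
    dsimp only
    refine ⟨⟨?_, ?_⟩, ⟨?_, ?_⟩, ⟨?_, ?_⟩⟩ <;> omega
  · intro p hp
    rw [Finset.mem_coe, mem_D] at hp
    rw [Finset.mem_coe, mem_E]
    simp only [Nrm, Matrix.cons_val_zero, Matrix.cons_val_one, Matrix.head_cons,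
      Matrix.cons_val_two, Matrix.tail_cons]
    omega
  · intro x hx
    rw [Finset.mem_coe, mem_E] at hx
    simp only [Nrm] at hx
    funext k
    fin_cases k <;>
      first
      | rfl
      | (simp only [Fin.zero_eta, Fin.mk_one, Fin.isValue, Matrix.cons_val_zero,
          Matrix.cons_val_one, Matrix.head_cons] <;> omega)
  · intro p hp
    rw [Finset.mem_coe, mem_D] at hp
    obtain ⟨z, u, v⟩ := p
    simp only at hp
    refine Sigma.ext rfl (heq_of_eq ?_)
    have h2 : (![u + v - ((n:ℤ) - z.natAbs), u - v, z] : Fin 3 → ℤ) 2 = z := rfl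
    dsimp only
    rw [h2]
    simp only [Matrix.cons_val_zero, Matrix.cons_val_one, Matrix.head_cons]
    refine Prod.ext ?_ ?_ <;> dsimp only <;> omega

lemma sum_Icc_natAbs (f : ℕ → ℕ) (n : ℕ) :
    ∑ z ∈ Finset.Icc (-(n : ℤ)) n, f z.natAbs = f 0 + 2 * ∑ j ∈ Finset.Icc 1 n, f j := by
  induction n with
  | zero => simp
  | succ n ih =>
    have h1 : Finset.Icc (-(n + 1 : ℤ)) (n + 1) =
        insert (-(n + 1 : ℤ)) (insert ((n + 1 : ℤ)) (Finset.Icc (-(n : ℤ)) n)) := by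
      ext z; simp only [Finset.mem_Icc, Finset.mem_insert]; push_cast; omega
    have h2 : Finset.Icc 1 (n + 1) = insert (n + 1) (Finset.Icc 1 n) := by
      ext j; simp only [Finset.mem_Icc, Finset.mem_insert]; omega
    have hm1 : (-(n + 1 : ℤ)) ∉ insert ((n + 1 : ℤ)) (Finset.Icc (-(n : ℤ)) n) := by
      simp only [Finset.mem_insert, Finset.mem_Icc]; push_cast; omega
    have hm2 : ((n + 1 : ℤ)) ∉ Finset.Icc (-(n : ℤ)) n := by
      simp only [Finset.mem_Icc]; push_cast; omega
    have hm3 : (n + 1) ∉ Finset.Icc 1 n := by simp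
    push_cast at h1 ⊢
    rw [h1, Finset.sum_insert hm1, Finset.sum_insert hm2, h2, Finset.sum_insert hm3, ih]
    have ha : ((-((n : ℤ) + 1))).natAbs = n + 1 := by omega
    have hb : ((n : ℤ) + 1).natAbs = n + 1 := by omega
    rw [ha, hb]
    ring

lemma Qsum (n : ℕ) : 6 * ∑ i ∈ Finset.range n, (i + 1) ^ 2 = n * (n + 1) * (2 * n + 1) := by
  induction n with
  | zero => simp
  | succ n ih => rw [Finset.sum_range_succ, Nat.mul_add, ih]; ring

lemma card_D (n : ℕ) :
    (D n).card = (n + 1) ^ 2 + 2 * ∑ i ∈ Finset.range n, (i + 1) ^ 2 := by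
  rw [D, Finset.card_sigma]
  have h1 : ∀ z ∈ Finset.Icc (-(n : ℤ)) n,
      (Finset.Icc (0 : ℤ) ((n : ℤ) - z.natAbs) ×ˢ Finset.Icc (0 : ℤ) ((n : ℤ) - z.natAbs)).card
        = (fun j => (n + 1 - j) ^ 2) z.natAbs := by
    intro z hz
    simp only [Finset.mem_Icc] at hz
    rw [Finset.card_product, Int.card_Icc]
    have : ((n : ℤ) - z.natAbs + 1 - 0).toNat = n + 1 - z.natAbs := by omega
    rw [this]; ring
  rw [Finset.sum_congr rfl h1, sum_Icc_natAbs (fun j => (n + 1 - j) ^ 2) n]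
  have h4 : ∑ j ∈ Finset.Icc 1 n, (n + 1 - j) ^ 2 = ∑ i ∈ Finset.range n, (i + 1) ^ 2 := by
    refine Finset.sum_nbij' (fun j => n - j) (fun i => n - i) ?_ ?_ ?_ ?_ ?_
    · intro a ha; simp only [Finset.mem_Icc] at ha; simp only [Finset.mem_range]; omega
    · intro a ha; simp only [Finset.mem_range] at ha; simp only [Finset.mem_Icc]; omega
    · intro a ha; simp only [Finset.mem_Icc] at ha; omega
    · intro a ha; simp only [Finset.mem_range] at ha; omega
    · intro a ha; simp only [Finset.mem_Icc] at ha; congr 1; omega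
  simp [h4]

lemma P_eq_E (n : ℕ) : P 3 n = ↑(E n) := by
  ext x
  rw [Finset.mem_coe, mem_E]
  constructor
  · exact fun h => P_sub n x h
  · exact fun h => sub_P n x h.1 h.2

theorem stmt_3 (n : ℕ) :
    (Nat.card (P 3 n) : ℚ) = (2 * n ^ 3 + 6 * n ^ 2 + 7 * n + 3) / 3 := by
  have hcard : Nat.card (P 3 n) = (E n).card := by
    rw [P_eq_E, Nat.card_coe_set_eq, Set.ncard_coe_finset]
  rw [hcard, card_E, card_D]
  set Q : ℕ := ∑ i ∈ Finset.range n, (i + 1) ^ 2 with hQdef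
  have hQ : (6 : ℚ) * (Q : ℚ) = n * (n + 1) * (2 * n + 1) := by
    exact_mod_cast congrArg (Nat.cast : ℕ → ℚ) (Qsum n)
  push_cast
  field_simp
  linarith [hQ]
end

section
/- For each fixed d ≥ 1, the function n ↦ |P_n^d| agrees with a polynomial in n of degree d with rational coefficients and leading coefficient 2^{d-1}/d!. -/
open Finset

def Nsum {d : ℕ} (x : Fin d → ℤ) : ℕ := ∑ i, (x i).natAbs

lemma Nsum_eq {d : ℕ} (z : Fin d → ℤ) (j : Fin d) :
    Nsum z = (z j).natAbs + ∑ i ∈ Finset.univ.erase j, (z i).natAbs := by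
  rw [Nsum, ← Finset.add_sum_erase _ _ (Finset.mem_univ j)]

lemma Nsum_add_single {d : ℕ} (y : Fin d → ℤ) (j : Fin d) (c : ℤ) (hc : c = 1 ∨ c = -1) :
    Nsum (y + (Pi.single j c : Fin d → ℤ)) = Nsum y + 1 ∨
      Nsum (y + (Pi.single j c : Fin d → ℤ)) + 1 = Nsum y := by
  classical
  have he : ∀ i ∈ Finset.univ.erase j, ((y + (Pi.single j c : Fin d → ℤ)) i).natAbs = (y i).natAbs := by
    intro i hi
    have h : i ≠ j := (Finset.mem_erase.mp hi).1
    simp [Pi.single_eq_of_ne h]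
  rw [Nsum_eq (y + (Pi.single j c : Fin d → ℤ)) j, Nsum_eq y j, Finset.sum_congr rfl he]
  have h2 : (y + (Pi.single j c : Fin d → ℤ)) j = y j + c := by simp
  rw [h2]
  rcases hc with rfl | rfl <;> omega

lemma P_subset {d n : ℕ} {x : Fin d → ℤ} (h : x ∈ P d n) :
    Nsum x ≤ n ∧ Nsum x % 2 = n % 2 := by
  induction n generalizing x with
  | zero =>
    obtain ⟨f, hf, rfl⟩ := h
    simp [Nsum]
  | succ n ih =>
    obtain ⟨f, hf, rfl⟩ := h
    rw [Fin.sum_univ_castSucc]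
    obtain ⟨j, hj⟩ := hf (Fin.last n)
    have hy := ih ⟨fun i => f i.castSucc, fun i => hf _, rfl⟩
    set y := ∑ i : Fin n, f i.castSucc with hy_def
    have hstep : Nsum (y + f (Fin.last n)) = Nsum y + 1 ∨
        Nsum (y + f (Fin.last n)) + 1 = Nsum y := by
      rcases hj with h | h <;> rw [h]
      · exact Nsum_add_single y j 1 (Or.inl rfl)
      · exact Nsum_add_single y j (-1) (Or.inr rfl)
    omega

lemma P_step {d n : ℕ} {y : Fin d → ℤ} (hy : y ∈ P d n) (j : Fin d) (c : ℤ)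
    (hc : c = 1 ∨ c = -1) : y + (Pi.single j c : Fin d → ℤ) ∈ P d (n + 1) := by
  obtain ⟨f, hf, rfl⟩ := hy
  refine ⟨Fin.snoc f (Pi.single j c), ?_, ?_⟩
  · intro i
    refine Fin.lastCases ?_ ?_ i
    · refine ⟨j, ?_⟩
      rcases hc with rfl | rfl <;> simp
    · intro k
      obtain ⟨j', hj'⟩ := hf k
      exact ⟨j', by simpa using hj'⟩
  · rw [Fin.sum_univ_castSucc]
    simp

lemma P_supset {d n : ℕ} (hd : 1 ≤ d) {x : Fin d → ℤ}
    (h1 : Nsum x ≤ n) (h2 : Nsum x % 2 = n % 2) : x ∈ P d n := by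
  induction n generalizing x with
  | zero =>
    have hx : x = 0 := by
      funext i
      have : (x i).natAbs ≤ Nsum x :=
        Finset.single_le_sum (f := fun i => (x i).natAbs) (fun _ _ => Nat.zero_le _)
          (Finset.mem_univ i)
      have h0 : (x i).natAbs = 0 := by omega
      show x i = 0
      omega
    exact ⟨fun i => i.elim0, fun i => i.elim0, by simp [hx]⟩
  | succ n ih =>
    by_cases h0 : Nsum x = 0
    · -- x = 0, n is odd
      have hx : x = 0 := by
        funext i
        have : (x i).natAbs ≤ Nsum x :=
          Finset.single_le_sum (f := fun i => (x i).natAbs) (fun _ _ => Nat.zero_le _)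
            (Finset.mem_univ i)
        show x i = 0
        omega
      set j0 : Fin d := ⟨0, hd⟩
      have hxy : x = (Pi.single j0 1 : Fin d → ℤ) + (Pi.single j0 (-1) : Fin d → ℤ) := by
        rw [hx]; funext i; by_cases h : i = j0 <;> simp [h]
      have hN1 : Nsum (Pi.single j0 (1:ℤ) : Fin d → ℤ) = 1 := by
        rw [Nsum_eq _ j0]
        have : ∀ i ∈ Finset.univ.erase j0, ((Pi.single j0 (1:ℤ) : Fin d → ℤ) i).natAbs = 0 := by
          intro i hi
          simp [Pi.single_eq_of_ne (Finset.mem_erase.mp hi).1]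
        rw [Finset.sum_congr rfl this]
        simp
      have hn : n % 2 = 1 := by omega
      rw [hxy]
      exact P_step (ih (by omega) (by omega)) j0 (-1) (Or.inr rfl)
    · -- pick j with x j ≠ 0, move toward 0
      have hj : ∃ j, x j ≠ 0 := by
        by_contra hc
        push_neg at hc
        have : Nsum x = 0 := by
          rw [Nsum]
          exact Finset.sum_eq_zero fun i _ => by rw [hc i]; rfl
        omega
      obtain ⟨j, hj⟩ := hj
      set c : ℤ := if 0 < x j then 1 else -1 with hc_def
      set y : Fin d → ℤ := x - (Pi.single j c : Fin d → ℤ) with hy_def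
      have hxy : x = y + (Pi.single j c : Fin d → ℤ) := by rw [hy_def]; ring
      have hyj : y j = x j - c := by simp [hy_def]
      have he : ∀ i ∈ Finset.univ.erase j, (y i).natAbs = (x i).natAbs := by
        intro i hi
        simp [hy_def, Pi.single_eq_of_ne (Finset.mem_erase.mp hi).1]
      have hNy : Nsum y + 1 = Nsum x := by
        rw [Nsum_eq y j, Nsum_eq x j, Finset.sum_congr rfl he, hyj]
        rcases lt_or_ge 0 (x j) with h | h
        · rw [hc_def]; simp only [if_pos h]; omega
        · have hlt : x j < 0 := lt_of_le_of_ne h hj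
          rw [hc_def]; simp only [if_neg (not_lt.mpr h)]; omega
      rw [hxy]
      exact P_step (ih (by omega) (by omega)) j c (by rcases lt_or_ge 0 (x j) with h | h <;> simp [hc_def, h])

noncomputable def F (d n : ℕ) : Finset (Fin d → ℤ) :=
  (Fintype.piFinset fun _ => Finset.Icc (-(n:ℤ)) n).filter
    fun x => Nsum x ≤ n ∧ Nsum x % 2 = n % 2

lemma mem_F {d n : ℕ} {x : Fin d → ℤ} :
    x ∈ F d n ↔ Nsum x ≤ n ∧ Nsum x % 2 = n % 2 := by
  constructor
  · intro h; exact (Finset.mem_filter.mp h).2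
  · intro h
    refine Finset.mem_filter.mpr ⟨?_, h⟩
    refine Fintype.mem_piFinset.mpr fun i => ?_
    have h1 : (x i).natAbs ≤ Nsum x :=
      Finset.single_le_sum (f := fun i => (x i).natAbs) (fun _ _ => Nat.zero_le _)
        (Finset.mem_univ i)
    have h2 : (x i).natAbs ≤ n := h1.trans h.1
    rw [Finset.mem_Icc]
    omega

lemma card_F_one (n : ℕ) : (F 1 n).card = n + 1 := by
  have key : (Finset.range (n+1)).card = (F 1 n).card := by
    refine Finset.card_bij' (fun k _ => fun _ => (2 * k - n : ℤ))
      (fun x _ => ((x 0 + n) / 2).toNat) ?_ ?_ ?_ ?_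
    · intro k hk
      rw [Finset.mem_range] at hk
      rw [mem_F]
      have hN : Nsum (fun _ : Fin 1 => (2 * k - n : ℤ)) = (2 * (k:ℤ) - n).natAbs := by
        simp [Nsum]
      rw [hN]
      omega
    · intro x hx
      rw [mem_F] at hx
      have hN : Nsum x = (x 0).natAbs := by simp [Nsum]
      rw [hN] at hx
      rw [Finset.mem_range]
      omega
    · intro k hk
      dsimp only
      rw [Finset.mem_range] at hk
      omega
    · intro x hx
      rw [mem_F] at hx
      have hN : Nsum x = (x 0).natAbs := by simp [Nsum]
      rw [hN] at hx
      funext i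
      have hi : i = 0 := Subsingleton.elim i 0
      rw [hi]
      omega
  rw [← key, Finset.card_range]

lemma Nsum_snoc {d : ℕ} (y : Fin d → ℤ) (t : ℤ) :
    Nsum (Fin.snoc y t : Fin (d+1) → ℤ) = Nsum y + t.natAbs := by
  rw [Nsum, Fin.sum_univ_castSucc]
  simp [Nsum]

lemma card_fiber (d n : ℕ) (t : ℤ) (ht : t.natAbs ≤ n) :
    ((F (d+1) n).filter (fun x => x (Fin.last d) = t)).card = (F d (n - t.natAbs)).card := by
  refine Finset.card_bij' (fun x _ => Fin.init x) (fun y _ => Fin.snoc y t) ?_ ?_ ?_ ?_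
  · intro x hx
    rw [Finset.mem_filter, mem_F] at hx
    obtain ⟨⟨h1, h2⟩, h3⟩ := hx
    have hN : Nsum x = Nsum (Fin.init x) + t.natAbs := by
      rw [← h3, Nsum, Fin.sum_univ_castSucc]
      rfl
    rw [mem_F]
    omega
  · intro y hy
    rw [mem_F] at hy
    rw [Finset.mem_filter, mem_F, Nsum_snoc]
    refine ⟨⟨by omega, by omega⟩, ?_⟩
    simp
  · intro x hx
    rw [Finset.mem_filter] at hx
    obtain ⟨hx1, hx2⟩ := hx
    rw [show t = x (Fin.last d) from hx2.symm]
    exact Fin.snoc_init_self x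
  · intro y hy
    simp

lemma sum_Icc_natAbs_s7 (h : ℕ → ℕ) (n : ℕ) :
    ∑ t ∈ Finset.Icc (-(n:ℤ)) n, h t.natAbs = h 0 + 2 * ∑ k ∈ Finset.range n, h (k+1) := by
  induction n with
  | zero => simp
  | succ n ih =>
    have hsplit : Finset.Icc (-((n+1:ℕ):ℤ)) ((n+1:ℕ):ℤ) =
        insert (-((n+1:ℕ):ℤ)) (insert ((n+1:ℕ):ℤ) (Finset.Icc (-(n:ℤ)) n)) := by
      ext a
      simp only [Finset.mem_Icc, Finset.mem_insert]
      push_cast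
      omega
    have h1 : ((n+1:ℕ):ℤ) ∉ insert (-((n+1:ℕ):ℤ)) (Finset.Icc (-(n:ℤ)) n) := by
      simp only [Finset.mem_insert, Finset.mem_Icc]
      push_cast
      omega
    have h2 : (-((n+1:ℕ):ℤ)) ∉ (insert ((n+1:ℕ):ℤ) (Finset.Icc (-(n:ℤ)) n)) := by
      simp only [Finset.mem_insert, Finset.mem_Icc]
      push_cast
      omega
    rw [hsplit, Finset.sum_insert h2, Finset.sum_insert (by
      simp only [Finset.mem_Icc]; push_cast; omega), ih,
      Finset.sum_range_succ]
    have h4 : ((-((n+1:ℕ):ℤ)).natAbs) = n + 1 := by omega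
    have h3 : ((((n+1:ℕ)):ℤ)).natAbs = n + 1 := by omega
    rw [h4, h3]
    ring

lemma card_F_succ (d n : ℕ) :
    (F (d+1) n).card = (F d n).card + 2 * ∑ m ∈ Finset.range n, (F d m).card := by
  have hmap : ∀ x ∈ F (d+1) n, x (Fin.last d) ∈ Finset.Icc (-(n:ℤ)) n := by
    intro x hx
    rw [mem_F] at hx
    have h1 : (x (Fin.last d)).natAbs ≤ Nsum x :=
      Finset.single_le_sum (f := fun i => (x i).natAbs) (fun _ _ => Nat.zero_le _)
        (Finset.mem_univ _)
    rw [Finset.mem_Icc]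
    omega
  rw [Finset.card_eq_sum_card_fiberwise hmap]
  have hfib : ∀ t ∈ Finset.Icc (-(n:ℤ)) n,
      ((F (d+1) n).filter (fun x => x (Fin.last d) = t)).card = (F d (n - t.natAbs)).card := by
    intro t ht
    rw [Finset.mem_Icc] at ht
    exact card_fiber d n t (by omega)
  rw [Finset.sum_congr rfl hfib, sum_Icc_natAbs_s7 (fun m => (F d (n - m)).card) n]
  simp only [Nat.sub_zero]
  congr 1
  have e2 : ∀ i ∈ Finset.range n, (F d (n - (i + 1))).card = (F d (n - 1 - i)).card := by
    intro i _
    have h : n - (i + 1) = n - 1 - i := by omega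
    rw [h]
  rw [Finset.sum_congr rfl e2, Finset.sum_range_reflect (fun m => (F d m).card) n]

noncomputable def B (p : ℕ) : Polynomial ℚ :=
  ∑ i ∈ Finset.range (p + 1),
    Polynomial.C (_root_.bernoulli i * ((p + 1).choose i) / (p + 1)) * Polynomial.X ^ (p + 1 - i)

lemma B_eval (p n : ℕ) : (B p).eval (n : ℚ) = ∑ k ∈ Finset.range n, (k : ℚ) ^ p := by
  rw [sum_range_pow n p, B]
  simp only [Polynomial.eval_finset_sum, Polynomial.eval_mul, Polynomial.eval_C,
    Polynomial.eval_pow, Polynomial.eval_X]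
  refine Finset.sum_congr rfl fun i _ => ?_
  ring

lemma B_natDegree_le (p : ℕ) : (B p).natDegree ≤ p + 1 := by
  refine Polynomial.natDegree_sum_le_of_forall_le _ _ fun i hi => ?_
  refine (Polynomial.natDegree_C_mul_le _ _).trans ?_
  simp only [Polynomial.natDegree_X_pow]
  omega

lemma B_coeff_top (p : ℕ) : (B p).coeff (p + 1) = 1 / (p + 1) := by
  rw [B, Polynomial.finset_sum_coeff]
  rw [Finset.sum_eq_single 0]
  · simp
  · intro i hi hne
    rw [Polynomial.coeff_C_mul, Polynomial.coeff_X_pow]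
    rw [Finset.mem_range] at hi
    rw [if_neg (by omega)]
    ring
  · simp

lemma sum_poly_exists (p : Polynomial ℚ) :
    ∃ q : Polynomial ℚ, (∀ n : ℕ, q.eval (n : ℚ) = ∑ m ∈ Finset.range n, p.eval (m : ℚ)) ∧
      q.coeff (p.natDegree + 1) = p.leadingCoeff / (p.natDegree + 1) ∧
      q.natDegree ≤ p.natDegree + 1 := by
  refine ⟨∑ k ∈ Finset.range (p.natDegree + 1), Polynomial.C (p.coeff k) * B k, ?_, ?_, ?_⟩
  · intro n
    simp only [Polynomial.eval_finset_sum, Polynomial.eval_mul, Polynomial.eval_C]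
    have : ∀ k ∈ Finset.range (p.natDegree + 1),
        p.coeff k * (B k).eval (n:ℚ) = ∑ m ∈ Finset.range n, p.coeff k * (m:ℚ)^k := by
      intro k _
      rw [B_eval, Finset.mul_sum]
    rw [Finset.sum_congr rfl this, Finset.sum_comm]
    refine Finset.sum_congr rfl fun m _ => ?_
    rw [Polynomial.eval_eq_sum_range]
  · rw [Polynomial.finset_sum_coeff]
    rw [Finset.sum_eq_single p.natDegree]
    · rw [Polynomial.coeff_C_mul, B_coeff_top, Polynomial.leadingCoeff]
      ring
    · intro k hk hne
      rw [Finset.mem_range] at hk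
      rw [Polynomial.coeff_C_mul,
        Polynomial.coeff_eq_zero_of_natDegree_lt ((B_natDegree_le k).trans_lt (by omega)),
        mul_zero]
    · intro h
      exact absurd (Finset.self_mem_range_succ p.natDegree) h
  · refine Polynomial.natDegree_sum_le_of_forall_le _ _ fun k hk => ?_
    refine (Polynomial.natDegree_C_mul_le _ _).trans ?_
    rw [Finset.mem_range] at hk
    exact (B_natDegree_le k).trans (by omega)

theorem key_s7 (d : ℕ) (hd : 1 ≤ d) :
    ∃ p : Polynomial ℚ, p.natDegree = d ∧
      p.leadingCoeff = 2 ^ (d - 1) / (d.factorial : ℚ) ∧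
      ∀ n : ℕ, p.eval (n : ℚ) = (F d n).card := by
  induction d, hd using Nat.le_induction with
  | base =>
    refine ⟨Polynomial.X + Polynomial.C 1, ?_, ?_, ?_⟩
    · exact Polynomial.natDegree_X_add_C 1
    · have h1 : (Polynomial.X + Polynomial.C (1:ℚ)).leadingCoeff = 1 :=
        Polynomial.monic_X_add_C 1
      rw [h1]
      simp [Nat.factorial]
    · intro n
      rw [card_F_one]
      push_cast
      simp
  | succ d hd ih =>
    obtain ⟨p, hdeg, hlead, heval⟩ := ih
    obtain ⟨q, hq_eval, hq_coeff, hq_deg⟩ := sum_poly_exists p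
    refine ⟨p + Polynomial.C 2 * q, ?_, ?_, ?_⟩
    all_goals
      have hfac : (d.factorial : ℚ) ≠ 0 := Nat.cast_ne_zero.mpr d.factorial_ne_zero
      have hd1 : ((d:ℚ) + 1) ≠ 0 := by positivity
      have hcoeff : (p + Polynomial.C 2 * q).coeff (d + 1) =
          2 ^ d / ((d+1).factorial : ℚ) := by
        rw [Polynomial.coeff_add, Polynomial.coeff_C_mul,
          Polynomial.coeff_eq_zero_of_natDegree_lt (by omega : p.natDegree < d + 1)]
        rw [hdeg] at hq_coeff
        rw [hq_coeff, hlead, Nat.factorial_succ]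
        have h2 : (2:ℚ) ^ d = 2 * 2 ^ (d - 1) := by
          rw [← pow_succ']
          congr 1
          omega
        push_cast
        rw [h2]
        field_simp
        ring
      have hcne : (p + Polynomial.C 2 * q).coeff (d + 1) ≠ 0 := by
        rw [hcoeff]
        positivity
      have hdegle : (p + Polynomial.C 2 * q).natDegree ≤ d + 1 := by
        refine Polynomial.natDegree_add_le_of_degree_le (by omega) ?_
        exact (Polynomial.natDegree_C_mul_le _ _).trans (by omega)
      have hdegeq : (p + Polynomial.C 2 * q).natDegree = d + 1 :=
        le_antisymm hdegle (Polynomial.le_natDegree_of_ne_zero hcne)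
    · exact hdegeq
    · rw [Polynomial.leadingCoeff, hdegeq, hcoeff]
      norm_num
    · intro n
      rw [Polynomial.eval_add, Polynomial.eval_mul, Polynomial.eval_C, heval, hq_eval,
        card_F_succ]
      have : ∑ m ∈ Finset.range n, p.eval (m:ℚ) = ∑ m ∈ Finset.range n, ((F d m).card : ℚ) :=
        Finset.sum_congr rfl fun m _ => heval m
      rw [this]
      push_cast
      ring

lemma P_eq (d n : ℕ) (hd : 1 ≤ d) : P d n = ↑(F d n) := by
  ext x
  rw [Finset.mem_coe, mem_F]
  exact ⟨fun h => P_subset h, fun h => P_supset hd h.1 h.2⟩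

theorem stmt_7 (d : ℕ) (hd : 1 ≤ d) :
    ∃ p : Polynomial ℚ, p.natDegree = d ∧
      p.leadingCoeff = 2 ^ (d - 1) / (d.factorial : ℚ) ∧
      ∀ n : ℕ, p.eval (n : ℚ) = Nat.card (P d n) := by
  obtain ⟨p, h1, h2, h3⟩ := key_s7 d hd
  refine ⟨p, h1, h2, fun n => ?_⟩
  rw [h3 n, P_eq d n hd, Nat.card_coe_set_eq, Set.ncard_coe_finset]
end
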